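/- (Sah's lemma for H¹.) Let k be a commutative ring, G a group, and M a representation of G over k. Let g be an element of the center of G. Then the G-equivariant map M → M given by m ↦ g•m − m induces the zero map on the first group cohomology H¹(G, M). -/

import Mathlib

universe u

open groupCohomology

/-- **Sah's lemma for `H¹`.** Let `k` be a commutative ring, `G` a group, `M` a representation
of `G` over `k`, and let `g` be central in `G`.  The `G`-equivariant map `M → M`,
`m ↦ g•m − m`, induces the zero map on `H¹(G, M)`: for any 1-cocycle `c`, the pushed-forward
function `x ↦ g•(c x) − c x` is again a 1-cocycle, and its cohomology class vanishes. -/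
theorem sah_lemma_H1 (k G : Type u) [CommRing k] [Group G] (M : Rep k G)
    (g : G) (hg : g ∈ Subgroup.center G) :
    ∀ c : groupCohomology.cocycles₁ M,
      ∃ d : groupCohomology.cocycles₁ M,
        (∀ x : G, d x = M.ρ g (c x) - c x) ∧ groupCohomology.H1π M d = 0 := by
  intro c
  have hc := (mem_cocycles₁_iff (c : G → M)).1 c.2
  have hf : ∀ x : G, M.ρ x (c g) - c g = M.ρ g (c x) - c x := by
    intro x
    have h1 : (c : G → M) (g * x) = M.ρ g (c x) + c g := hc g x
    have h2 : (c : G → M) (x * g) = M.ρ x (c g) + c x := hc x g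
    have hcomm : g * x = x * g := (Subgroup.mem_center_iff.1 hg x).symm
    rw [hcomm, h2] at h1
    linear_combination (norm := module) h1
  refine ⟨⟨fun x => M.ρ x (c g) - c g, coboundaries₁_le_cocycles₁ M ⟨c g, rfl⟩⟩, fun x => hf x, ?_⟩
  exact (H1π_eq_zero_iff _).2 ⟨c g, rfl⟩
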